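/- Let Γ ⊂ ℝ₊ be countable with coefficients b_γ ∈ ℂ satisfying Σ_{0<γ<1}|b_γ| < ∞, and define g(z) = Σ_{γ∈Γ, 0<γ<1} b_γ (e^{2πiγz} − 1)/γ. Then g is a well-defined entire function, and |g(z)| = o(|z|) as |z| → ∞ within the closed upper half-plane ∪ ℝ; moreover, in every horizontal strip {|Im z| < M} one has |g(z) − g(Re z)| ≤ C(M) for a constant C(M) depending only on M (and the b_γ). -/

import Mathlib

open Real


noncomputable def gterm (b : ℝ → ℂ) (γ : ℝ) (z : ℂ) : ℂ :=
  b γ * (Complex.exp (2 * π * Complex.I * γ * z) - 1) / (γ : ℂ)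

lemma exp_seg_bound {w : ℂ} {K : ℝ} (hK : ∀ u ∈ segment ℝ (0:ℂ) w, ‖Complex.exp u‖ ≤ K) :
    ‖Complex.exp w - 1‖ ≤ K * ‖w‖ := by
  have h := (convex_segment (0:ℂ) w).norm_image_sub_le_of_norm_hasDerivWithin_le
    (f := Complex.exp) (f' := Complex.exp)
    (fun x _ => (Complex.hasDerivAt_exp x).hasDerivWithinAt) hK
    (left_mem_segment ℝ (0:ℂ) w) (right_mem_segment ℝ (0:ℂ) w)
  simpa using h

lemma mem_seg {w u : ℂ} (hu : u ∈ segment ℝ (0:ℂ) w) :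
    ∃ t : ℝ, 0 ≤ t ∧ t ≤ 1 ∧ u = t • w := by
  obtain ⟨a, c, ha, hc, hac, rfl⟩ := hu
  exact ⟨c, hc, by linarith, by simp⟩

lemma norm_exp_sub_one_le_of_re_nonpos {w : ℂ} (h : w.re ≤ 0) :
    ‖Complex.exp w - 1‖ ≤ ‖w‖ := by
  have := exp_seg_bound (w := w) (K := 1) ?_
  · simpa using this
  · intro u hu
    obtain ⟨t, ht0, ht1, rfl⟩ := mem_seg hu
    rw [Complex.norm_exp]
    have : (t • w).re = t * w.re := by simp [Complex.smul_re]
    rw [this]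
    exact Real.exp_le_one_iff.2 (mul_nonpos_of_nonneg_of_nonpos ht0 h)

lemma norm_exp_sub_one_le (w : ℂ) :
    ‖Complex.exp w - 1‖ ≤ Real.exp ‖w‖ * ‖w‖ := by
  refine exp_seg_bound fun u hu => ?_
  obtain ⟨t, ht0, ht1, rfl⟩ := mem_seg hu
  rw [Complex.norm_exp]
  refine Real.exp_le_exp.2 ?_
  calc (t • w).re ≤ ‖t • w‖ := Complex.re_le_norm _
    _ = t * ‖w‖ := by simp [norm_smul, abs_of_nonneg ht0]
    _ ≤ 1 * ‖w‖ := by nlinarith [norm_nonneg w]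
    _ = ‖w‖ := one_mul _

lemma norm_two_pi_I (γ : ℝ) (hγ : 0 ≤ γ) (z : ℂ) :
    ‖2*(π:ℂ)*Complex.I*(γ:ℂ)*z‖ = 2*π*γ*‖z‖ := by
  simp [map_mul, Complex.norm_real, Complex.norm_I,
    Real.norm_eq_abs, abs_of_nonneg hγ, abs_of_nonneg Real.pi_nonneg]

lemma re_two_pi_I (γ : ℝ) (z : ℂ) :
    (2*(π:ℂ)*Complex.I*(γ:ℂ)*z).re = -(2*π*γ*z.im) := by
  have : (2*(π:ℂ)*Complex.I*(γ:ℂ)*z) = ((2*π*γ : ℝ) : ℂ) * (Complex.I * z) := by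
    push_cast; ring
  rw [this, Complex.re_ofReal_mul]
  simp [Complex.mul_re]

lemma gterm_norm (b : ℝ → ℂ) {γ : ℝ} (hγ : 0 < γ) (z : ℂ) :
    ‖gterm b γ z‖ = ‖b γ‖ * ‖Complex.exp (2 * π * Complex.I * γ * z) - 1‖ / γ := by
  rw [gterm, norm_div, norm_mul]
  congr 1
  simp [Complex.norm_real, Real.norm_eq_abs, abs_of_pos hγ]

lemma gterm_diff (b : ℝ → ℂ) (γ : ℝ) : Differentiable ℂ (gterm b γ) := by
  unfold gterm
  fun_prop

lemma gterm_boundA (b : ℝ → ℂ) {γ : ℝ} (hγ : γ ∈ Set.Ioo (0:ℝ) 1) (z : ℂ) :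
    ‖gterm b γ z‖ ≤ ‖b γ‖ * (2 * π * Real.exp (2 * π * ‖z‖) * ‖z‖) := by
  obtain ⟨hγ0, hγ1⟩ := hγ
  rw [gterm_norm b hγ0, div_le_iff₀ hγ0]
  have h1 := norm_exp_sub_one_le (2*(π:ℂ)*Complex.I*(γ:ℂ)*z)
  rw [norm_two_pi_I γ hγ0.le] at h1
  have h3 : 2*π*γ*‖z‖ ≤ 2*π*‖z‖ := by nlinarith [mul_nonneg (mul_nonneg (mul_nonneg (by norm_num : (0:ℝ) ≤ 2) Real.pi_pos.le) (norm_nonneg z)) (sub_nonneg.2 hγ1.le)]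
  have h4 : Real.exp (2*π*γ*‖z‖) ≤ Real.exp (2*π*‖z‖) := Real.exp_le_exp.2 h3
  have h5 : ‖Complex.exp (2*(π:ℂ)*Complex.I*(γ:ℂ)*z) - 1‖
      ≤ Real.exp (2*π*‖z‖) * (2*π*γ*‖z‖) := by
    refine h1.trans ?_
    have hw : 0 ≤ 2*π*γ*‖z‖ := by positivity
    nlinarith
  calc ‖b γ‖ * ‖Complex.exp (2*(π:ℂ)*Complex.I*(γ:ℂ)*z) - 1‖
      ≤ ‖b γ‖ * (Real.exp (2*π*‖z‖) * (2*π*γ*‖z‖)) :=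
        mul_le_mul_of_nonneg_left h5 (norm_nonneg _)
    _ = ‖b γ‖ * (2 * π * Real.exp (2*π*‖z‖) * ‖z‖) * γ := by ring

lemma gterm_boundB (b : ℝ → ℂ) {γ : ℝ} (hγ : γ ∈ Set.Ioo (0:ℝ) 1) {z : ℂ} (hz : 0 ≤ z.im) :
    ‖gterm b γ z‖ ≤ ‖b γ‖ * (2 * π * ‖z‖) := by
  obtain ⟨hγ0, hγ1⟩ := hγ
  rw [gterm_norm b hγ0, div_le_iff₀ hγ0]
  have hre : (2*(π:ℂ)*Complex.I*(γ:ℂ)*z).re ≤ 0 := by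
    rw [re_two_pi_I]
    have : 0 ≤ 2*π*γ*z.im := by positivity
    linarith
  have h1 := norm_exp_sub_one_le_of_re_nonpos hre
  rw [norm_two_pi_I γ hγ0.le] at h1
  calc ‖b γ‖ * ‖Complex.exp (2*(π:ℂ)*Complex.I*(γ:ℂ)*z) - 1‖
      ≤ ‖b γ‖ * (2*π*γ*‖z‖) := mul_le_mul_of_nonneg_left h1 (norm_nonneg _)
    _ = ‖b γ‖ * (2 * π * ‖z‖) * γ := by ring

lemma gterm_boundC (b : ℝ → ℂ) {γ : ℝ} (hγ : γ ∈ Set.Ioo (0:ℝ) 1) {z : ℂ} (hz : 0 ≤ z.im) :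
    ‖gterm b γ z‖ ≤ ‖b γ‖ * (2 / γ) := by
  obtain ⟨hγ0, hγ1⟩ := hγ
  rw [gterm_norm b hγ0]
  have hre : (2*(π:ℂ)*Complex.I*(γ:ℂ)*z).re ≤ 0 := by
    rw [re_two_pi_I]
    have : 0 ≤ 2*π*γ*z.im := by positivity
    linarith
  have h1 : ‖Complex.exp (2*(π:ℂ)*Complex.I*(γ:ℂ)*z) - 1‖ ≤ 2 := by
    refine (norm_sub_le _ _).trans ?_
    have : ‖Complex.exp (2*(π:ℂ)*Complex.I*(γ:ℂ)*z)‖ ≤ 1 := by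
      rw [Complex.norm_exp]
      exact Real.exp_le_one_iff.2 hre
    simp only [norm_one]
    linarith
  rw [div_le_iff₀ hγ0]
  have hc : ‖b γ‖ * (2/γ) * γ = ‖b γ‖ * 2 := by field_simp
  rw [hc]
  exact mul_le_mul_of_nonneg_left h1 (norm_nonneg _)

lemma gterm_strip (b : ℝ → ℂ) {γ : ℝ} (hγ : γ ∈ Set.Ioo (0:ℝ) 1) {M : ℝ} (hM : 0 < M)
    {z : ℂ} (hz : |z.im| < M) :
    ‖gterm b γ z - gterm b γ (z.re : ℂ)‖ ≤ ‖b γ‖ * (2 * π * M * Real.exp (2 * π * M)) := by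
  obtain ⟨hγ0, hγ1⟩ := hγ
  have heq : gterm b γ z - gterm b γ (z.re:ℂ)
      = b γ * (Complex.exp (2*(π:ℂ)*Complex.I*(γ:ℂ)*z)
          - Complex.exp (2*(π:ℂ)*Complex.I*(γ:ℂ)*(z.re:ℂ))) / (γ:ℂ) := by
    unfold gterm; ring
  have hfactor : Complex.exp (2*(π:ℂ)*Complex.I*(γ:ℂ)*z)
          - Complex.exp (2*(π:ℂ)*Complex.I*(γ:ℂ)*(z.re:ℂ))
      = Complex.exp (2*(π:ℂ)*Complex.I*(γ:ℂ)*(z.re:ℂ))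
        * (Complex.exp (2*(π:ℂ)*Complex.I*(γ:ℂ)*(z - z.re)) - 1) := by
    rw [mul_sub, mul_one, ← Complex.exp_add]
    congr 2
    ring
  have h1 : ‖Complex.exp (2*(π:ℂ)*Complex.I*(γ:ℂ)*(z.re:ℂ))‖ = 1 := by
    rw [Complex.norm_exp, re_two_pi_I]
    simp
  have hnw : ‖2*(π:ℂ)*Complex.I*(γ:ℂ)*(z - z.re)‖ = 2*π*γ*|z.im| := by
    rw [norm_two_pi_I γ hγ0.le]
    congr 1
    have : z - (z.re:ℂ) = (z.im : ℂ) * Complex.I := by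
      simp [Complex.ext_iff]
    rw [this]
    simp
  have h4 : ‖Complex.exp (2*(π:ℂ)*Complex.I*(γ:ℂ)*(z - z.re)) - 1‖
      ≤ Real.exp (2*π*M) * (2*π*γ*M) := by
    refine (norm_exp_sub_one_le _).trans ?_
    rw [hnw]
    have him : |z.im| ≤ M := hz.le
    have h5 : 2*π*γ*|z.im| ≤ 2*π*γ*M := by nlinarith [mul_nonneg (mul_nonneg (mul_nonneg (by norm_num : (0:ℝ) ≤ 2) Real.pi_pos.le) hγ0.le) (sub_nonneg.2 him)]
    have h6 : 2*π*γ*M ≤ 2*π*M := by nlinarith [mul_nonneg (mul_nonneg (mul_nonneg (by norm_num : (0:ℝ) ≤ 2) Real.pi_pos.le) hM.le) (sub_nonneg.2 hγ1.le)]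
    have h7 : Real.exp (2*π*γ*|z.im|) ≤ Real.exp (2*π*M) := Real.exp_le_exp.2 (h5.trans h6)
    have h8 : 0 ≤ 2*π*γ*|z.im| := by positivity
    nlinarith [Real.exp_pos (2*π*M)]
  rw [heq, hfactor, norm_div, norm_mul, norm_mul, h1, one_mul]
  have hnγ : ‖(γ:ℂ)‖ = γ := by simp [Complex.norm_real, abs_of_pos hγ0]
  rw [hnγ, div_le_iff₀ hγ0]
  calc ‖b γ‖ * ‖Complex.exp (2*(π:ℂ)*Complex.I*(γ:ℂ)*(z - z.re)) - 1‖
      ≤ ‖b γ‖ * (Real.exp (2*π*M) * (2*π*γ*M)) := mul_le_mul_of_nonneg_left h4 (norm_nonneg _)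
    _ = ‖b γ‖ * (2*π*M*Real.exp (2*π*M)) * γ := by ring

/-- for countable `Γ ⊂ (0,∞)` with `Σ_{0<γ<1}|b_γ| < ∞`, the function
`g(z) = Σ_{0<γ<1} b_γ (e^{2πiγz}-1)/γ` is a well-defined entire function with
`g(z) = o(|z|)` as `|z| → ∞` in the closed upper half-plane, and
`|g(z) - g(Re z)| ≤ C(M)` in every strip `|Im z| < M`. -/
theorem g_function_properties (b : ℝ → ℂ)
    (hsupp : (Function.support b).Countable)
    (hpos : ∀ γ : ℝ, γ ≤ 0 → b γ = 0)
    (hsum : Summable fun γ : (Set.Ioo (0:ℝ) 1) => ‖b γ.1‖) :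
    ∃ g : ℂ → ℂ,
      (∀ z : ℂ, HasSum (fun γ : (Set.Ioo (0:ℝ) 1) =>
        b γ.1 * (Complex.exp (2 * π * Complex.I * γ.1 * z) - 1) / (γ.1 : ℂ)) (g z)) ∧
      Differentiable ℂ g ∧
      (∀ ε > (0:ℝ), ∃ R : ℝ, ∀ z : ℂ, 0 ≤ z.im → R ≤ ‖z‖ → ‖g z‖ ≤ ε * ‖z‖) ∧
      (∀ M > (0:ℝ), ∃ C : ℝ, ∀ z : ℂ, |z.im| < M → ‖g z - g (z.re : ℂ)‖ ≤ C) := by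
  classical
  -- summability at every point
  have hS : ∀ z : ℂ, Summable (fun γ : (Set.Ioo (0:ℝ) 1) => gterm b γ.1 z) := by
    intro z
    refine Summable.of_norm_bounded (hsum.mul_right (2 * π * Real.exp (2*π*‖z‖) * ‖z‖)) ?_
    exact fun γ => gterm_boundA b γ.2 z
  set g : ℂ → ℂ := fun z => ∑' γ : (Set.Ioo (0:ℝ) 1), gterm b γ.1 z with hg
  refine ⟨g, fun z => (hS z).hasSum, ?_, ?_, ?_⟩
  · -- differentiable
    intro z₀
    set R : ℝ := ‖z₀‖ + 1 with hR
    have hRpos : 0 < R := by positivity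
    have hdiff : DifferentiableOn ℂ g (Metric.ball (0:ℂ) R) := by
      refine Complex.differentiableOn_tsum_of_summable_norm
        (u := fun γ : (Set.Ioo (0:ℝ) 1) => ‖b γ.1‖ * (2 * π * Real.exp (2*π*R) * R))
        (hsum.mul_right _) (fun γ => (gterm_diff b γ.1).differentiableOn)
        Metric.isOpen_ball ?_
      intro γ w hw
      have hwR : ‖w‖ ≤ R := (mem_ball_zero_iff.1 hw).le
      refine (gterm_boundA b γ.2 w).trans ?_
      have h1 : 2 * π * Real.exp (2*π*‖w‖) * ‖w‖ ≤ 2 * π * Real.exp (2*π*R) * R := by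
        have he : Real.exp (2*π*‖w‖) ≤ Real.exp (2*π*R) := by
          refine Real.exp_le_exp.2 ?_
          nlinarith [Real.pi_pos]
        have := norm_nonneg w
        nlinarith [Real.pi_pos, mul_nonneg (Real.exp_pos (2*π*R)).le (sub_nonneg.2 hwR), mul_nonneg (sub_nonneg.2 he) this]
      exact mul_le_mul_of_nonneg_left h1 (norm_nonneg _)
    have hmem : z₀ ∈ Metric.ball (0:ℂ) R := by
      rw [mem_ball_zero_iff]; simp [hR]
    exact hdiff.differentiableAt (Metric.isOpen_ball.mem_nhds hmem)
  · -- o(|z|) growth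
    intro ε hε
    have htail := tendsto_tsum_compl_atTop_zero (fun γ : (Set.Ioo (0:ℝ) 1) => ‖b γ.1‖)
    have hε' : 0 < ε / (2 * (2*π)) := by positivity
    obtain ⟨F, hF⟩ := ((tendsto_order.1 htail).2 _ hε').exists
    set K : ℝ := ∑ γ ∈ F, ‖b γ.1‖ * (2 / γ.1) with hK
    have hK0 : 0 ≤ K := by
      refine Finset.sum_nonneg fun γ _ => ?_
      have := γ.2.1
      positivity
    refine ⟨max 1 (2*K/ε), fun z him hRz => ?_⟩
    have hz1 : (1:ℝ) ≤ ‖z‖ := le_trans (le_max_left _ _) hRz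
    have hzK : 2*K/ε ≤ ‖z‖ := le_trans (le_max_right _ _) hRz
    have hsplit := Summable.sum_add_tsum_compl (s := F) (hS z)
    have hhead : ‖∑ γ ∈ F, gterm b γ.1 z‖ ≤ K := by
      refine (norm_sum_le _ _).trans ?_
      exact Finset.sum_le_sum fun γ _ => gterm_boundC b γ.2 him
    have hsubsum : Summable (fun γ : ↑((F : Set (Set.Ioo (0:ℝ) 1)))ᶜ => ‖b γ.1.1‖) :=
      hsum.subtype _
    have htailsum : ‖∑' γ : ↑((F : Set (Set.Ioo (0:ℝ) 1)))ᶜ, gterm b γ.1.1 z‖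
        ≤ (∑' γ : ↑((F : Set (Set.Ioo (0:ℝ) 1)))ᶜ, ‖b γ.1.1‖) * (2 * π * ‖z‖) := by
      refine tsum_of_norm_bounded (hsubsum.hasSum.mul_right _) ?_
      exact fun γ => gterm_boundB b γ.1.2 him
    have hT : (∑' γ : ↑((F : Set (Set.Ioo (0:ℝ) 1)))ᶜ, ‖b γ.1.1‖) < ε / (2 * (2*π)) := hF
    have hT0 : 0 ≤ ∑' γ : ↑((F : Set (Set.Ioo (0:ℝ) 1)))ᶜ, ‖b γ.1.1‖ :=
      tsum_nonneg fun _ => norm_nonneg _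
    have hgz : ‖g z‖ ≤ K + (∑' γ : ↑((F : Set (Set.Ioo (0:ℝ) 1)))ᶜ, ‖b γ.1.1‖) * (2 * π * ‖z‖) := by
      show ‖∑' γ : (Set.Ioo (0:ℝ) 1), gterm b γ.1 z‖ ≤ _
      rw [← hsplit]
      exact (norm_add_le _ _).trans (add_le_add hhead htailsum)
    have hπ : (0:ℝ) < π := Real.pi_pos
    have h2 : (∑' γ : ↑((F : Set (Set.Ioo (0:ℝ) 1)))ᶜ, ‖b γ.1.1‖) * (2 * π * ‖z‖)
        ≤ (ε / (2 * (2*π))) * (2 * π * ‖z‖) := by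
      refine mul_le_mul_of_nonneg_right hT.le (by positivity)
    have h3 : (ε / (2 * (2*π))) * (2 * π * ‖z‖) = ε * ‖z‖ / 2 := by
      field_simp
    have h4 : K ≤ ε * ‖z‖ / 2 := by
      rw [div_le_iff₀ hε] at hzK
      nlinarith
    calc ‖g z‖ ≤ K + (∑' γ : ↑((F : Set (Set.Ioo (0:ℝ) 1)))ᶜ, ‖b γ.1.1‖) * (2 * π * ‖z‖) := hgz
      _ ≤ ε * ‖z‖ / 2 + ε * ‖z‖ / 2 := add_le_add h4 (h2.trans_eq h3)
      _ = ε * ‖z‖ := by ring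
  · -- strip bound
    intro M hM
    refine ⟨(∑' γ : (Set.Ioo (0:ℝ) 1), ‖b γ.1‖) * (2 * π * M * Real.exp (2*π*M)),
      fun z hzM => ?_⟩
    have hdiffeq : g z - g (z.re : ℂ)
        = ∑' γ : (Set.Ioo (0:ℝ) 1), (gterm b γ.1 z - gterm b γ.1 (z.re : ℂ)) := by
      rw [hg]
      exact (Summable.tsum_sub (hS z) (hS (z.re : ℂ))).symm
    rw [hdiffeq]
    refine tsum_of_norm_bounded (hsum.hasSum.mul_right _) ?_
    exact fun γ => gterm_strip b γ.2 hM hzM
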